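/- arXiv:1806.11240 — 3 statements merged into one kernel-verified Lean document; each statement's English description precedes it below -/
import Mathlib

section
/- Let (X, d) be a metric space, δ₁, δ₂, δ₁′, δ₂′ : (0,η) → X arcs, and q a real number such that d(δᵢ(t), δᵢ′(t)) = Θ(t^q) for i = 1, 2 (i.e. δᵢ and δᵢ′ are joined by 'paths' of size Θ(t^q)). If d(δ₁′(t), δ₂′(t)) = Θ(t^{q'}) with q' < q, and d(δ₁(t), δ₂(t)) = Θ(t^{q''}), then q'' = q'. In other words, contact exponents strictly smaller than the correction exponent are preserved. -/
/-- `f(t) = Θ(t^q)` as `t → 0⁺`. -/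
def ThetaAt (f : ℝ → ℝ) (q : ℝ) : Prop :=
  ∃ η > (0 : ℝ), ∃ K : ℝ, 1 ≤ K ∧
    ∀ t : ℝ, 0 < t → t < η → (1 / K) * t ^ q ≤ f t ∧ f t ≤ K * t ^ q

lemma theta_not_lt {f : ℝ → ℝ} {a b : ℝ} (ha : ThetaAt f a) (hb : ThetaAt f b) :
    ¬ a < b := by
  intro hab
  obtain ⟨η₁, hη₁, K₁, hK₁, H₁⟩ := ha
  obtain ⟨η₂, hη₂, K₂, hK₂, H₂⟩ := hb
  set C : ℝ := K₁ * K₂ with hC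
  have hC1 : (1:ℝ) ≤ C := by nlinarith
  have hCpos : (0:ℝ) < C := lt_of_lt_of_le one_pos hC1
  set c : ℝ := ((2*C)⁻¹) ^ (b - a)⁻¹ with hc
  have hcpos : 0 < c := Real.rpow_pos_of_pos (by positivity) _
  set t : ℝ := min (min η₁ η₂ / 2) (c / 2) with htdef
  have ht : 0 < t := lt_min (by positivity) (by positivity)
  have ht1 : t < η₁ := lt_of_le_of_lt (min_le_left _ _)
    (lt_of_le_of_lt (by linarith [min_le_left η₁ η₂] : min η₁ η₂ / 2 ≤ η₁ / 2) (by linarith))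
  have ht2 : t < η₂ := lt_of_le_of_lt (min_le_left _ _)
    (lt_of_le_of_lt (by linarith [min_le_right η₁ η₂] : min η₁ η₂ / 2 ≤ η₂ / 2) (by linarith))
  have htc : t < c := lt_of_le_of_lt (min_le_right _ _) (by linarith)
  have hba : 0 < b - a := by linarith
  have h1 := H₁ t ht ht1
  have h2 := H₂ t ht ht2
  -- t^a ≤ C * t^b
  have hK₁pos : (0:ℝ) < K₁ := lt_of_lt_of_le one_pos hK₁
  have hupper : t ^ a ≤ C * t ^ b := by
    have := le_trans h1.1 h2.2
    rw [div_mul_eq_mul_div, div_le_iff₀ hK₁pos] at this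
    calc t ^ a = 1 * t ^ a := (one_mul _).symm
    _ ≤ K₂ * t ^ b * K₁ := this
    _ = C * t ^ b := by ring
  -- but t^(b-a) < (2C)⁻¹ gives contradiction
  have hsmall : t ^ (b - a) < (2*C)⁻¹ := by
    have := Real.rpow_lt_rpow (le_of_lt ht) htc hba
    rwa [hc, ← Real.rpow_mul (by positivity), inv_mul_cancel₀ (ne_of_gt hba),
      Real.rpow_one] at this
  have hsplit : t ^ b = t ^ a * t ^ (b - a) := by
    rw [← Real.rpow_add ht]; ring_nf
  have hta : 0 < t ^ a := Real.rpow_pos_of_pos ht _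
  rw [hsplit] at hupper
  have h3 : C * (t ^ a * t ^ (b - a)) < C * (t ^ a * (2*C)⁻¹) :=
    mul_lt_mul_of_pos_left (mul_lt_mul_of_pos_left hsmall hta) hCpos
  have heq : C * (t ^ a * (2*C)⁻¹) = t ^ a / 2 := by field_simp
  linarith

lemma theta_unique {f : ℝ → ℝ} {a b : ℝ} (ha : ThetaAt f a) (hb : ThetaAt f b) :
    a = b :=
  le_antisymm (not_lt.mp (theta_not_lt hb ha)) (not_lt.mp (theta_not_lt ha hb))

/-- Contact exponents strictly smaller than the correction exponent are preserved. -/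
theorem contact_preserved {X : Type*} [MetricSpace X]
    (δ₁ δ₂ δ₁' δ₂' : ℝ → X) (q q' q'' : ℝ)
    (h₁ : ThetaAt (fun t => dist (δ₁ t) (δ₁' t)) q)
    (h₂ : ThetaAt (fun t => dist (δ₂ t) (δ₂' t)) q)
    (h' : ThetaAt (fun t => dist (δ₁' t) (δ₂' t)) q')
    (hlt : q' < q)
    (h'' : ThetaAt (fun t => dist (δ₁ t) (δ₂ t)) q'') :
    q'' = q' := by
  apply theta_unique h''
  obtain ⟨η₁, hη₁, K₁, hK₁, H₁⟩ := h₁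
  obtain ⟨η₂, hη₂, K₂, hK₂, H₂⟩ := h₂
  obtain ⟨η₃, hη₃, K₃, hK₃, H₃⟩ := h'
  have hK₁p : (0:ℝ) < K₁ := lt_of_lt_of_le one_pos hK₁
  have hK₂p : (0:ℝ) < K₂ := lt_of_lt_of_le one_pos hK₂
  have hK₃p : (0:ℝ) < K₃ := lt_of_lt_of_le one_pos hK₃
  set S : ℝ := K₁ + K₂ with hS
  have hSp : (0:ℝ) < S := by positivity
  have hqq : 0 < q - q' := by linarith
  set c : ℝ := ((2*K₃*S)⁻¹) ^ (q - q')⁻¹ with hc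
  have hcpos : 0 < c := Real.rpow_pos_of_pos (by positivity) _
  refine ⟨min (min η₁ η₂) (min η₃ (min 1 c)), by positivity, 2*K₃*S + (K₁+K₂+K₃),
    by nlinarith, fun t ht htη => ?_⟩
  have ht1 : t < η₁ := lt_of_lt_of_le htη (le_trans (min_le_left _ _) (min_le_left _ _))
  have ht2 : t < η₂ := lt_of_lt_of_le htη (le_trans (min_le_left _ _) (min_le_right _ _))
  have ht3 : t < η₃ := lt_of_lt_of_le htη (le_trans (min_le_right _ _) (min_le_left _ _))
  have htone : t < 1 := lt_of_lt_of_le htη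
    (le_trans (min_le_right _ _) (le_trans (min_le_right _ _) (min_le_left _ _)))
  have htc : t < c := lt_of_lt_of_le htη
    (le_trans (min_le_right _ _) (le_trans (min_le_right _ _) (min_le_right _ _)))
  have A := H₁ t ht ht1
  have B := H₂ t ht ht2
  have C := H₃ t ht ht3
  simp only at A B C
  have htq : 0 < t ^ q := Real.rpow_pos_of_pos ht _
  have htq' : 0 < t ^ q' := Real.rpow_pos_of_pos ht _
  have hmono : t ^ q ≤ t ^ q' :=
    Real.rpow_le_rpow_of_exponent_ge ht (le_of_lt htone) (le_of_lt hlt)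
  have hsmall : t ^ (q - q') < (2*K₃*S)⁻¹ := by
    have := Real.rpow_lt_rpow (le_of_lt ht) htc hqq
    rwa [hc, ← Real.rpow_mul (by positivity), inv_mul_cancel₀ (ne_of_gt hqq),
      Real.rpow_one] at this
  have hsplit : t ^ q = t ^ q' * t ^ (q - q') := by
    rw [← Real.rpow_add ht]; ring_nf
  -- S * t^q ≤ (1/(2K₃)) * t^q'
  have hkey : S * t ^ q ≤ 1 / (2*K₃) * t ^ q' := by
    rw [hsplit]
    rw [div_mul_eq_mul_div, le_div_iff₀ (by positivity)]
    have hstep : t ^ q' * t ^ (q-q') ≤ t ^ q' * (2*K₃*S)⁻¹ :=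
      mul_le_mul_of_nonneg_left (le_of_lt hsmall) (le_of_lt htq')
    calc S * (t ^ q' * t ^ (q - q')) * (2*K₃)
        = (S * (2*K₃)) * (t ^ q' * t ^ (q - q')) := by ring
    _ ≤ (S * (2*K₃)) * (t ^ q' * (2*K₃*S)⁻¹) :=
        mul_le_mul_of_nonneg_left hstep (by positivity)
    _ = 1 * t ^ q' := by field_simp
  have dtri : dist (δ₁ t) (δ₂ t) ≤ dist (δ₁ t) (δ₁' t) + dist (δ₁' t) (δ₂' t)
      + dist (δ₂ t) (δ₂' t) := by
    calc dist (δ₁ t) (δ₂ t) ≤ dist (δ₁ t) (δ₂' t) + dist (δ₂' t) (δ₂ t) := dist_triangle _ _ _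
    _ ≤ dist (δ₁ t) (δ₁' t) + dist (δ₁' t) (δ₂' t) + dist (δ₂' t) (δ₂ t) := by
        linarith [dist_triangle (δ₁ t) (δ₁' t) (δ₂' t)]
    _ = _ := by rw [dist_comm (δ₂' t)]
  have dtri2 : dist (δ₁' t) (δ₂' t) ≤ dist (δ₁ t) (δ₁' t) + dist (δ₁ t) (δ₂ t)
      + dist (δ₂ t) (δ₂' t) := by
    calc dist (δ₁' t) (δ₂' t) ≤ dist (δ₁' t) (δ₁ t) + dist (δ₁ t) (δ₂' t) := dist_triangle _ _ _
    _ ≤ dist (δ₁' t) (δ₁ t) + (dist (δ₁ t) (δ₂ t) + dist (δ₂ t) (δ₂' t)) := by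
        linarith [dist_triangle (δ₁ t) (δ₂ t) (δ₂' t)]
    _ = _ := by rw [dist_comm (δ₁' t)]; ring
  constructor
  · -- lower bound
    have hlow : 1 / K₃ * t ^ q' - S * t ^ q ≤ dist (δ₁ t) (δ₂ t) := by
      linarith [A.2, B.2, dtri2, C.1]
    have hm : 1 / (2*K₃*S + (K₁+K₂+K₃)) ≤ 1 / (2*K₃) := by
      apply one_div_le_one_div_of_le (by positivity); nlinarith
    have hhalf : 1 / K₃ * t ^ q' - 1 / (2*K₃) * t ^ q' = 1 / (2*K₃) * t ^ q' := by
      field_simp; ring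
    calc 1 / (2*K₃*S + (K₁+K₂+K₃)) * t ^ q' ≤ 1 / (2*K₃) * t ^ q' :=
          mul_le_mul_of_nonneg_right hm (le_of_lt htq')
    _ ≤ dist (δ₁ t) (δ₂ t) := by linarith [hlow, hkey, hhalf]
  · -- upper bound
    calc dist (δ₁ t) (δ₂ t) ≤ K₁ * t ^ q + K₃ * t ^ q' + K₂ * t ^ q := by
          linarith [A.2, B.2, C.2, dtri]
    _ ≤ K₁ * t ^ q' + K₃ * t ^ q' + K₂ * t ^ q' := by
          have m1 := mul_le_mul_of_nonneg_left hmono (le_of_lt hK₁p)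
          have m2 := mul_le_mul_of_nonneg_left hmono (le_of_lt hK₂p)
          linarith
    _ = (K₁ + K₃ + K₂) * t ^ q' := by ring
    _ ≤ (2*K₃*S + (K₁+K₂+K₃)) * t ^ q' := by
          apply mul_le_mul_of_nonneg_right _ (le_of_lt htq')
          nlinarith
end

section
/- Let X be a set with two metrics d_i and d_o satisfying d_o ≤ d_i, and let δ₁, δ₂, δ₁′, δ₂′ : (0,η) → X be arcs with d_i(δᵢ(t), δᵢ′(t)) = Θ(t^q) for i = 1, 2, where q strictly exceeds the inner contact exponent q_i(δ₁′,δ₂′) of δ₁′ and δ₂′. If q_i(δ₁,δ₂) = q_o(δ₁,δ₂) (the pair δ₁,δ₂ satisfies the arc criterion), then also q_i(δ₁′,δ₂′) = q_o(δ₁′,δ₂′). (Partner pair lemma.) -/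
/-- A distance function satisfying the metric axioms. -/
def IsMetric {X : Type*} (d : X → X → ℝ) : Prop :=
  (∀ x y, 0 ≤ d x y) ∧ (∀ x y, d x y = d y x) ∧
    (∀ x y z, d x z ≤ d x y + d y z) ∧ (∀ x y, d x y = 0 ↔ x = y)

/-- If `c t^a ≤ C t^b` for all small positive `t`, then `b ≤ a`. -/
lemma exp_core {a b c C η : ℝ} (hη : 0 < η) (hc : 0 < c) (hC : 0 < C)
    (h : ∀ t : ℝ, 0 < t → t < η → c * t ^ a ≤ C * t ^ b) : b ≤ a := by
  by_contra hab
  push_neg at hab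
  have hp0 : 0 < b - a := by linarith
  set s := (c / (2 * C)) ^ (1 / (b - a)) with hs
  have hx : (0:ℝ) < c / (2 * C) := by positivity
  have hspos : 0 < s := Real.rpow_pos_of_pos hx _
  set t := min (η / 2) s with ht
  have ht0 : 0 < t := lt_min (by linarith) hspos
  have htη : t < η := lt_of_le_of_lt (min_le_left _ _) (by linarith)
  have h1 := h t ht0 htη
  have hsp : s ^ (b - a) = c / (2 * C) := by
    rw [hs, ← Real.rpow_mul hx.le, one_div_mul_cancel hp0.ne', Real.rpow_one]
  have hts : t ^ (b - a) ≤ c / (2 * C) := by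
    calc t ^ (b - a) ≤ s ^ (b - a) :=
          Real.rpow_le_rpow ht0.le (min_le_right _ _) hp0.le
      _ = c / (2 * C) := hsp
  have htb : t ^ b = t ^ a * t ^ (b - a) := by
    rw [← Real.rpow_add ht0]; ring_nf
  have hta : 0 < t ^ a := Real.rpow_pos_of_pos ht0 a
  have h2 : C * t ^ b ≤ (c / 2) * t ^ a := by
    rw [htb]
    have : C * (t ^ a * t ^ (b - a)) ≤ C * (t ^ a * (c / (2 * C))) := by
      apply mul_le_mul_of_nonneg_left (mul_le_mul_of_nonneg_left hts hta.le) hC.le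
    calc C * (t ^ a * t ^ (b - a)) ≤ C * (t ^ a * (c / (2 * C))) := this
      _ = (c / 2) * t ^ a := by field_simp
  nlinarith [mul_pos hc hta]

/-- Variant with a negligible error term of higher exponent. -/
lemma exp_core2 {a b e c C D η : ℝ} (hη : 0 < η) (hc : 0 < c) (hC : 0 < C) (hD : 0 < D)
    (hae : a < e)
    (h : ∀ t : ℝ, 0 < t → t < η → c * t ^ a ≤ C * t ^ b + D * t ^ e) : b ≤ a := by
  have hp0 : 0 < e - a := by linarith
  have hx : (0:ℝ) < c / (2 * D) := by positivity
  set s := (c / (2 * D)) ^ (1 / (e - a)) with hs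
  have hspos : 0 < s := Real.rpow_pos_of_pos hx _
  have hsp : s ^ (e - a) = c / (2 * D) := by
    rw [hs, ← Real.rpow_mul hx.le, one_div_mul_cancel hp0.ne', Real.rpow_one]
  refine exp_core (η := min η s) (c := c / 2) (C := C) (lt_min hη hspos)
    (by linarith) hC ?_
  intro t ht0 htm
  have h1 := h t ht0 (lt_of_lt_of_le htm (min_le_left _ _))
  have hts : t ^ (e - a) ≤ c / (2 * D) := by
    calc t ^ (e - a) ≤ s ^ (e - a) :=
          Real.rpow_le_rpow ht0.le (le_of_lt (lt_of_lt_of_le htm (min_le_right _ _))) hp0.le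
      _ = c / (2 * D) := hsp
  have hte : t ^ e = t ^ a * t ^ (e - a) := by
    rw [← Real.rpow_add ht0]; ring_nf
  have hta : 0 < t ^ a := Real.rpow_pos_of_pos ht0 a
  have h2 : D * t ^ e ≤ (c / 2) * t ^ a := by
    rw [hte]
    calc D * (t ^ a * t ^ (e - a)) ≤ D * (t ^ a * (c / (2 * D))) := by
          apply mul_le_mul_of_nonneg_left (mul_le_mul_of_nonneg_left hts hta.le) hD.le
      _ = (c / 2) * t ^ a := by field_simp
  linarith

/-- Partner pair lemma. -/
theorem partner_pair {X : Type*} (din dout : X → X → ℝ)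
    (hdin : IsMetric din) (hdout : IsMetric dout)
    (hle : ∀ x y, dout x y ≤ din x y)
    (δ₁ δ₂ δ₁' δ₂' : ℝ → X) (q qi' qo' qi qo : ℝ)
    (h₁ : ThetaAt (fun t => din (δ₁ t) (δ₁' t)) q)
    (h₂ : ThetaAt (fun t => din (δ₂ t) (δ₂' t)) q)
    (hqi' : ThetaAt (fun t => din (δ₁' t) (δ₂' t)) qi')
    (hqo' : ThetaAt (fun t => dout (δ₁' t) (δ₂' t)) qo')
    (hqi : ThetaAt (fun t => din (δ₁ t) (δ₂ t)) qi)
    (hqo : ThetaAt (fun t => dout (δ₁ t) (δ₂ t)) qo)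
    (hq : qi' < q)
    (harc : qi = qo) :
    qi' = qo' := by
  obtain ⟨_, dsymm, dtri, _⟩ := hdin
  obtain ⟨_, osymm, otri, _⟩ := hdout
  obtain ⟨η1, hη1, K1, hK1, H1⟩ := h₁
  obtain ⟨η2, hη2, K2, hK2, H2⟩ := h₂
  obtain ⟨η3, hη3, K3, hK3, H3⟩ := hqi'
  obtain ⟨η4, hη4, K4, hK4, H4⟩ := hqo'
  obtain ⟨η5, hη5, K5, hK5, H5⟩ := hqi
  obtain ⟨η6, hη6, K6, hK6, H6⟩ := hqo
  set η0 := min (min (min η1 η2) (min η3 η4)) (min (min η5 η6) 1) with hη0def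
  have hη0 : 0 < η0 := by
    simp only [hη0def, lt_min_iff]
    exact ⟨⟨⟨hη1, hη2⟩, hη3, hη4⟩, ⟨hη5, hη6⟩, one_pos⟩
  have hmem : ∀ t : ℝ, 0 < t → t < η0 →
      t < η1 ∧ t < η2 ∧ t < η3 ∧ t < η4 ∧ t < η5 ∧ t < η6 ∧ t < 1 := by
    intro t ht0 ht
    simp only [hη0def, lt_min_iff] at ht
    exact ⟨ht.1.1.1, ht.1.1.2, ht.1.2.1, ht.1.2.2, ht.2.1.1, ht.2.1.2, ht.2.2⟩
  -- Step 1: qi' ≤ qi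
  have s1 : qi' ≤ qi := by
    refine exp_core (c := 1 / K5) (C := K1 + K2 + K3) hη0 (by positivity)
      (by positivity) ?_
    intro t ht0 ht
    obtain ⟨m1, m2, m3, _, m5, _, m7⟩ := hmem t ht0 ht
    have b5 := (H5 t ht0 m5).1
    have b1 := (H1 t ht0 m1).2
    have b2 := (H2 t ht0 m2).2
    have b3 := (H3 t ht0 m3).2
    have tri : din (δ₁ t) (δ₂ t) ≤
        din (δ₁ t) (δ₁' t) + din (δ₁' t) (δ₂' t) + din (δ₂ t) (δ₂' t) := by
      have ha := dtri (δ₁ t) (δ₁' t) (δ₂ t)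
      have hb := dtri (δ₁' t) (δ₂' t) (δ₂ t)
      have hc := dsymm (δ₂' t) (δ₂ t)
      linarith
    have hpow : t ^ q ≤ t ^ qi' :=
      Real.rpow_le_rpow_of_exponent_ge ht0 m7.le hq.le
    have hK1q : K1 * t ^ q ≤ K1 * t ^ qi' :=
      mul_le_mul_of_nonneg_left hpow (by linarith)
    have hK2q : K2 * t ^ q ≤ K2 * t ^ qi' :=
      mul_le_mul_of_nonneg_left hpow (by linarith)
    simp only at b1 b2 b3 b5
    linarith
  -- Step 2: qi ≤ qi'
  have s2 : qi ≤ qi' := by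
    refine exp_core2 (c := 1 / K3) (C := K5) (D := K1 + K2) (e := q) hη0
      (by positivity) (by positivity) (by positivity) hq ?_
    intro t ht0 ht
    obtain ⟨m1, m2, m3, _, m5, _, _⟩ := hmem t ht0 ht
    have b3 := (H3 t ht0 m3).1
    have b1 := (H1 t ht0 m1).2
    have b2 := (H2 t ht0 m2).2
    have b5 := (H5 t ht0 m5).2
    have tri : din (δ₁' t) (δ₂' t) ≤
        din (δ₁ t) (δ₁' t) + din (δ₁ t) (δ₂ t) + din (δ₂ t) (δ₂' t) := by
      have ha := dtri (δ₁' t) (δ₁ t) (δ₂' t)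
      have hb := dtri (δ₁ t) (δ₂ t) (δ₂' t)
      have hc := dsymm (δ₁' t) (δ₁ t)
      linarith
    simp only at b1 b2 b3 b5
    linarith
  have e1 : qi = qi' := le_antisymm s2 s1
  -- Step 3: qi' ≤ qo'
  have s3 : qi' ≤ qo' := by
    refine exp_core (c := 1 / K4) (C := K3) hη0 (by positivity) (by positivity) ?_
    intro t ht0 ht
    obtain ⟨_, _, m3, m4, _, _, _⟩ := hmem t ht0 ht
    have b4 := (H4 t ht0 m4).1
    have b3 := (H3 t ht0 m3).2
    have hl := hle (δ₁' t) (δ₂' t)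
    simp only at b3 b4
    linarith
  -- Step 4: qo' ≤ qo
  have s4 : qo' ≤ qo := by
    refine exp_core2 (c := 1 / K6) (C := K4) (D := K1 + K2) (e := q) hη0
      (by positivity) (by positivity) (by positivity) (by linarith [e1, harc]) ?_
    intro t ht0 ht
    obtain ⟨m1, m2, _, m4, _, m6, _⟩ := hmem t ht0 ht
    have b6 := (H6 t ht0 m6).1
    have b4 := (H4 t ht0 m4).2
    have b1 := (H1 t ht0 m1).2
    have b2 := (H2 t ht0 m2).2
    have tri : dout (δ₁ t) (δ₂ t) ≤
        dout (δ₁ t) (δ₁' t) + dout (δ₁' t) (δ₂' t) + dout (δ₂ t) (δ₂' t) := by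
      have ha := otri (δ₁ t) (δ₁' t) (δ₂ t)
      have hb := otri (δ₁' t) (δ₂' t) (δ₂ t)
      have hc := osymm (δ₂' t) (δ₂ t)
      linarith
    have hl1 := hle (δ₁ t) (δ₁' t)
    have hl2 := hle (δ₂ t) (δ₂' t)
    simp only at b1 b2 b4 b6
    linarith
  linarith [e1, harc]
end

section
/- Let G be a finite connected graph with weights q : V(G) → ℚ and Q(v,v') the max over paths from v to v' of the min weight along the path. If v₀ is a vertex with q(v₀) = Q(v,v') realized on some path from v to v', and if v'' lies in the same connected component of G ∖ {v₀} as v while q(w) > q(v₀) for all vertices w on some path from v to v'' avoiding v₀, then Q(v,v'') > q(v₀) implies Q(v'',v') = Q(v,v'). More simply: if v and v'' lie in the same connected component of G ∖ {v₀} and Q(v,v'') > q(v₀) = Q(v,v'), then Q(v'',v') = Q(v,v') = q(v₀). -/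
/-- The minimum of the weight `q` over the vertices of a walk `w` (including endpoints). -/
def walkMin {V : Type*} (G : SimpleGraph V) (q : V → ℚ) {v v' : V}
    (w : G.Walk v v') : ℚ :=
  (w.support.map q).foldr min (q v)

private lemma le_foldr_min (c a : ℚ) (l : List ℚ) (ha : c ≤ a)
    (hl : ∀ x ∈ l, c ≤ x) : c ≤ l.foldr min a := by
  induction l with
  | nil => simpa
  | cons b t ih =>
    simp only [List.foldr_cons, le_min_iff]
    exact ⟨hl b (by simp), ih fun x hx => hl x (by simp [hx])⟩

private lemma foldr_min_le_mem {x : ℚ} (a : ℚ) (l : List ℚ) (hx : x ∈ l) :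
    l.foldr min a ≤ x := by
  induction l with
  | nil => simp at hx
  | cons b t ih =>
    rcases List.mem_cons.1 hx with h | h
    · simp [h, min_le_left]
    · exact le_trans (min_le_right _ _) (ih h)

private lemma walkMin_le_of_mem {V : Type*} (G : SimpleGraph V) (q : V → ℚ) {v v' : V}
    (w : G.Walk v v') {x : V} (hx : x ∈ w.support) : walkMin G q w ≤ q x :=
  foldr_min_le_mem _ _ (List.mem_map_of_mem (f := q) hx)

private lemma le_walkMin {V : Type*} (G : SimpleGraph V) (q : V → ℚ) {v v' : V}
    (w : G.Walk v v') (c : ℚ) (h : ∀ x ∈ w.support, c ≤ q x) : c ≤ walkMin G q w := by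
  refine le_foldr_min _ _ _ (h v w.start_mem_support) ?_
  intro x hx
  obtain ⟨y, hy, rfl⟩ := List.mem_map.1 hx
  exact h y hy

/-- If `v` and `v''` lie in the same connected component of `G ∖ {v₀}` and
`Q(v,v'') > q(v₀) = Q(v,v')`, then `Q(v'',v') = Q(v,v') = q(v₀)`. -/
theorem maxmin_separating_vertex {V : Type*} [Fintype V] (G : SimpleGraph V)
    (hconn : G.Connected) (q : V → ℚ) (Q : V → V → ℚ)
    (hub : ∀ (a b : V) (w : G.Walk a b), walkMin G q w ≤ Q a b)
    (hmax : ∀ a b : V, ∃ w : G.Walk a b, walkMin G q w = Q a b)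
    (v v' v'' v₀ : V)
    (hcomp : ∃ w : G.Walk v v'', v₀ ∉ w.support)
    (hgt : q v₀ < Q v v'')
    (heq : Q v v' = q v₀) :
    Q v'' v' = q v₀ := by
  obtain ⟨w₁, hw₁⟩ := hmax v v''
  obtain ⟨w, hw⟩ := hmax v v'
  have upper : Q v'' v' ≤ q v₀ := by
    by_contra h
    push_neg at h
    obtain ⟨w₂, hw₂⟩ := hmax v'' v'
    have hle : min (Q v v'') (Q v'' v') ≤ walkMin G q (w₁.append w₂) := by
      apply le_walkMin
      intro x hx
      rcases (SimpleGraph.Walk.mem_support_append_iff _ _).1 hx with hx | hx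
      · exact le_trans (min_le_left _ _) (hw₁ ▸ walkMin_le_of_mem G q w₁ hx)
      · exact le_trans (min_le_right _ _) (hw₂ ▸ walkMin_le_of_mem G q w₂ hx)
    have := hub v v' (w₁.append w₂)
    rw [heq] at this
    have : min (Q v v'') (Q v'' v') ≤ q v₀ := le_trans hle this
    exact absurd this (by simpa [not_le, lt_min_iff] using And.intro hgt h)
  have lower : q v₀ ≤ Q v'' v' := by
    have hle : q v₀ ≤ walkMin G q (w₁.reverse.append w) := by
      apply le_walkMin
      intro x hx
      rcases (SimpleGraph.Walk.mem_support_append_iff _ _).1 hx with hx | hx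
      · rw [SimpleGraph.Walk.support_reverse, List.mem_reverse] at hx
        exact le_of_lt (lt_of_lt_of_le hgt (hw₁ ▸ walkMin_le_of_mem G q w₁ hx))
      · exact heq ▸ hw ▸ walkMin_le_of_mem G q w hx
    exact le_trans hle (hub v'' v' _)
  linarith
end
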